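/- (Non-orthogonality criterion, half-line) Let V be locally integrable on [0,∞), E ∈ ℝ, and f ∈ L²(0,∞) with support in [0,s]. For z in the upper half plane let u_{f,z} = (H_D - z)⁻¹ f, where H_D is the Dirichlet Schrödinger operator -d²/dx² + V on [0,∞). Suppose lim_{δ→0+} inf{ ‖(u_{f,z}(s), u_{f,z}'(s))‖ : z ∈ ℂ₊, |z - E| ≤ δ } = 0. Then ⟨u_{0,E}, f⟩ = ∫_0^∞ u_{0,E}(t) conj(f(t)) dt = 0, where u_{0,E} is the solution of -u'' + Vu = Eu with u(0) = 0, u'(0) = 1. -/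

import Mathlib

open MeasureTheory intervalIntegral

open Set

lemma integrableOn_mul_of_bound {k h : ℝ → ℝ} {A : Set ℝ}
    (hk : IntegrableOn k A) (hm : AEStronglyMeasurable h (volume.restrict A))
    (M : ℝ) (hb : ∀ x ∈ A, |h x| ≤ M) (hA : MeasurableSet A) :
    IntegrableOn (fun r => k r * h r) A := by
  refine Integrable.mono' ((hk.norm.const_mul M)) (hk.1.mul hm) ?_
  filter_upwards [ae_restrict_mem hA] with x hx
  rw [norm_mul]
  calc ‖k x‖ * ‖h x‖ ≤ ‖k x‖ * M := by
        refine mul_le_mul_of_nonneg_left ?_ (norm_nonneg _)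
        simpa [Real.norm_eq_abs] using hb x hx
    _ = M * ‖k x‖ := mul_comm _ _

lemma gronwall_fwd (s : ℝ) (k : ℝ → ℝ) (hk : IntegrableOn k (Ioc 0 s) volume)
    (hknn : ∀ t, 0 ≤ k t) :
    ∃ C : ℝ, 1 ≤ C ∧ ∀ (h : ℝ → ℝ) (a : ℝ), 0 ≤ a →
      ContinuousOn h (Icc 0 s) → (∀ t ∈ Icc 0 s, 0 ≤ h t) →
      (∀ t ∈ Icc 0 s, h t ≤ a + ∫ r in Ioc 0 t, k r * h r) →
      ∀ t ∈ Icc 0 s, h t ≤ C * a := by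
  rcases lt_or_ge s 0 with hs | hs
  · exact ⟨1, le_rfl, fun h a _ _ _ _ t ht => absurd ht (by simp [Icc_eq_empty_of_lt hs])⟩
  set P : ℝ → ℝ := fun t => ∫ r in Ioc 0 t, k r with hP
  have hPc : ContinuousOn P (Icc 0 s) :=
    intervalIntegral.continuousOn_primitive ((integrableOn_Icc_iff_integrableOn_Ioc (ha := enorm_ne_top)).2 hk)
  have hPnn : ∀ t, 0 ≤ P t := fun t =>
    setIntegral_nonneg measurableSet_Ioc fun x _ => hknn x
  have hPmono : ∀ t t', t ≤ t' → t' ≤ s → P t ≤ P t' := by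
    intro t t' htt' ht's
    apply setIntegral_mono_set (hk.mono_set (Ioc_subset_Ioc_right ht's))
    · filter_upwards with x using hknn x
    · exact HasSubset.Subset.eventuallyLE (Ioc_subset_Ioc_right htt')
  have hP0 : P 0 = 0 := by simp [hP]
  set K : ℝ := P s with hK
  have hKnn : 0 ≤ K := hPnn s
  set N : ℕ := Nat.ceil (2 * K) with hN
  refine ⟨(2 + 2 * K) ^ N, one_le_pow₀ (by linarith), ?_⟩
  intro h a ha hc hnn hineq
  -- integrability of k * h on subintervals
  have hmeas : ∀ t, t ∈ Icc 0 s → IntegrableOn (fun r => k r * h r) (Ioc 0 t) := by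
    intro t ht
    have hsub : Ioc 0 t ⊆ Icc 0 s := fun x hx => ⟨hx.1.le, hx.2.trans ht.2⟩
    obtain ⟨M, hM⟩ := isCompact_Icc.exists_bound_of_continuousOn hc
    exact integrableOn_mul_of_bound (hk.mono_set (Ioc_subset_Ioc_right ht.2))
      ((hc.mono hsub).aestronglyMeasurable measurableSet_Ioc) M
      (fun x hx => by simpa [Real.norm_eq_abs] using hM x (hsub hx)) measurableSet_Ioc
  have key : ∀ n : ℕ, ∀ T ∈ Icc 0 s, P T ≤ (n : ℝ) / 2 →
      ∀ t ∈ Icc 0 T, h t ≤ (2 + 2 * K) ^ n * a := by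
    intro n
    induction n with
    | zero =>
      intro T hT hPT t ht
      have hts : t ∈ Icc 0 s := ⟨ht.1, ht.2.trans hT.2⟩
      have h1 : ∫ r in Ioc 0 t, k r * h r = 0 := by
        have hk0 : ∀ᵐ x ∂(volume.restrict (Ioc 0 t)), k x = 0 := by
          have : P t = 0 := le_antisymm (by
            calc P t ≤ P T := hPmono t T ht.2 hT.2
              _ ≤ 0 := by simpa using hPT) (hPnn t)
          have := (integral_eq_zero_iff_of_nonneg (fun x => hknn x)
            (hk.mono_set (Ioc_subset_Ioc_right hts.2))).1 this
          filter_upwards [this] with x hx using hx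
        rw [integral_eq_zero_of_ae]
        filter_upwards [hk0] with x hx
        simp [hx]
      rw [pow_zero, one_mul]
      calc h t ≤ a + ∫ r in Ioc 0 t, k r * h r := hineq t hts
        _ = a := by rw [h1, add_zero]
    | succ n ih =>
      intro T hT hPT t ht
      -- sup of h on Icc 0 T
      obtain ⟨t₀, ht₀, hmax⟩ := isCompact_Icc.exists_isMaxOn (nonempty_Icc.2 hT.1)
        (hc.mono (Icc_subset_Icc le_rfl hT.2))
      set M : ℝ := h t₀ with hM
      have hMnn : 0 ≤ M := hnn t₀ ⟨ht₀.1, ht₀.2.trans hT.2⟩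
      -- intermediate point T'
      have hmem : min ((n : ℝ) / 2) (P T) ∈ Icc (P 0) (P T) := by
        constructor
        · rw [hP0]; exact le_min (by positivity) (hPnn T)
        · exact min_le_right _ _
      obtain ⟨T', hT', hPT'⟩ := intermediate_value_Icc hT.1
        (hPc.mono (Icc_subset_Icc le_rfl hT.2)) hmem
      have hT's : T' ∈ Icc 0 s := ⟨hT'.1, hT'.2.trans hT.2⟩
      have ihT' : ∀ r ∈ Icc 0 T', h r ≤ (2 + 2 * K) ^ n * a :=
        ih T' hT's (hPT'.le.trans (min_le_left _ _))
      -- estimate for all t ∈ Icc 0 T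
      have hbound : ∀ t ∈ Icc 0 T, h t ≤ a + K * ((2 + 2 * K) ^ n * a) + M / 2 := by
        intro t ht
        have hts : t ∈ Icc 0 s := ⟨ht.1, ht.2.trans hT.2⟩
        set m : ℝ := min t T' with hm
        have hm0 : 0 ≤ m := le_min ht.1 hT'.1
        have hmt : m ≤ t := min_le_left _ _
        have hms : m ∈ Icc 0 s := ⟨hm0, hmt.trans hts.2⟩
        have hker : ∫ r in Ioc 0 t, k r = (∫ r in Ioc 0 m, k r) + ∫ r in Ioc m t, k r := by
          rw [← Ioc_union_Ioc_eq_Ioc hm0 hmt]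
          exact setIntegral_union (Ioc_disjoint_Ioc_of_le le_rfl) measurableSet_Ioc
            ((hk.mono_set (Ioc_subset_Ioc_right hts.2)).mono_set (Ioc_subset_Ioc_right hmt))
            ((hk.mono_set (Ioc_subset_Ioc_right hts.2)).mono_set (Ioc_subset_Ioc_left hm0))
        have hsplit : ∫ r in Ioc 0 t, k r * h r
            = (∫ r in Ioc 0 m, k r * h r) + ∫ r in Ioc m t, k r * h r := by
          rw [← Ioc_union_Ioc_eq_Ioc hm0 hmt]
          exact setIntegral_union (Ioc_disjoint_Ioc_of_le le_rfl) measurableSet_Ioc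
            ((hmeas t hts).mono_set (Ioc_subset_Ioc_right hmt))
            ((hmeas t hts).mono_set (Ioc_subset_Ioc_left hm0))
        have e1 : ∫ r in Ioc 0 m, k r * h r ≤ K * ((2 + 2 * K) ^ n * a) := by
          have step : ∫ r in Ioc 0 m, k r * h r
              ≤ ∫ r in Ioc 0 m, k r * ((2 + 2 * K) ^ n * a) := by
            refine setIntegral_mono_on ((hmeas m hms))
              ((hk.mono_set (Ioc_subset_Ioc_right hms.2)).mul_const _)
              measurableSet_Ioc ?_
            intro x hx
            exact mul_le_mul_of_nonneg_left
              (ihT' x ⟨hx.1.le, hx.2.trans (min_le_right _ _)⟩) (hknn x)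
          calc ∫ r in Ioc 0 m, k r * h r ≤ _ := step
            _ = P m * ((2 + 2 * K) ^ n * a) := by rw [MeasureTheory.integral_mul_const]
            _ ≤ K * ((2 + 2 * K) ^ n * a) := by
                refine mul_le_mul_of_nonneg_right (hPmono m s hms.2 le_rfl) ?_
                positivity
        have e2 : ∫ r in Ioc m t, k r * h r ≤ M / 2 := by
          have step : ∫ r in Ioc m t, k r * h r ≤ ∫ r in Ioc m t, k r * M := by
            refine setIntegral_mono_on
              ((hmeas t hts).mono_set (Ioc_subset_Ioc_left hm0))
              (((hk.mono_set (Ioc_subset_Ioc_right hts.2)).mono_set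
                (Ioc_subset_Ioc_left hm0)).mul_const _)
              measurableSet_Ioc ?_
            intro x hx
            exact mul_le_mul_of_nonneg_left (hmax ⟨hm0.trans hx.1.le, hx.2.trans ht.2⟩)
              (hknn x)
          have hPtm : P t - P m ≤ 1 / 2 := by
            rcases le_or_gt t T' with hcase | hcase
            · have : m = t := min_eq_left hcase
              rw [this]; norm_num
            · have hmT' : m = T' := min_eq_right hcase.le
              rcases le_or_gt (P T) ((n : ℝ) / 2) with hc2 | hc2
              · have : P T' = P T := by rw [hPT', min_eq_right hc2]
                have hPtT : P t ≤ P T := hPmono t T ht.2 hT.2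
                rw [hmT', this]; linarith
              · have : P T' = (n : ℝ) / 2 := by rw [hPT', min_eq_left hc2.le]
                have hPtT : P t ≤ P T := hPmono t T ht.2 hT.2
                push_cast at hPT
                rw [hmT', this]; linarith
          calc ∫ r in Ioc m t, k r * h r ≤ _ := step
            _ = (P t - P m) * M := by
                rw [MeasureTheory.integral_mul_const]
                have h4 : P t = P m + ∫ r in Ioc m t, k r := hker
                rw [h4]; ring
            _ ≤ (1 / 2) * M := mul_le_mul_of_nonneg_right hPtm hMnn
            _ = M / 2 := by ring
        calc h t ≤ a + ∫ r in Ioc 0 t, k r * h r := hineq t hts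
          _ = a + ((∫ r in Ioc 0 m, k r * h r) + ∫ r in Ioc m t, k r * h r) := by
              rw [hsplit]
          _ ≤ a + (K * ((2 + 2 * K) ^ n * a) + M / 2) := by linarith
          _ = a + K * ((2 + 2 * K) ^ n * a) + M / 2 := by ring
      have hMle : M ≤ (2 + 2 * K) ^ (n + 1) * a := by
        have h1 : M ≤ a + K * ((2 + 2 * K) ^ n * a) + M / 2 := hbound t₀ ht₀
        have h2 : (1 : ℝ) ≤ (2 + 2 * K) ^ n := one_le_pow₀ (by linarith)
        have h3 : (2 + 2 * K) ^ (n + 1) = (2 + 2 * K) * (2 + 2 * K) ^ n := by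
          rw [pow_succ]; ring
        nlinarith [mul_nonneg hKnn (mul_nonneg (le_trans zero_le_one h2) ha)]
      exact le_trans (hmax ht) hMle
  intro t ht
  exact key N s ⟨le_rfl.trans hs, le_rfl⟩ (by
    have := Nat.le_ceil (2 * K); rw [← hN] at this; linarith [this]) t ht

lemma gronwall_bwd (s : ℝ) (k : ℝ → ℝ) (hk : IntegrableOn k (Ioc 0 s) volume)
    (hknn : ∀ t, 0 ≤ k t) :
    ∃ C : ℝ, 1 ≤ C ∧ ∀ (h : ℝ → ℝ) (a : ℝ), 0 ≤ a →
      ContinuousOn h (Icc 0 s) → (∀ t ∈ Icc 0 s, 0 ≤ h t) →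
      (∀ t ∈ Icc 0 s, h t ≤ a + ∫ r in Ioc t s, k r * h r) →
      ∀ t ∈ Icc 0 s, h t ≤ C * a := by
  rcases lt_or_ge s 0 with hs | hs
  · exact ⟨1, le_rfl, fun h a _ _ _ _ t ht => absurd ht (by simp [Icc_eq_empty_of_lt hs])⟩
  have hrefl : ∀ (g : ℝ → ℝ) (t : ℝ), 0 ≤ t → t ≤ s →
      (∫ r in Ioc 0 t, g (s - r)) = ∫ r in Ioc (s - t) s, g r := by
    intro g t ht hts
    rw [← intervalIntegral.integral_of_le ht,
      intervalIntegral.integral_comp_sub_left g s, sub_zero,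
      intervalIntegral.integral_of_le (by linarith)]
  have hki : IntegrableOn (fun r => k (s - r)) (Ioc 0 s) volume := by
    have h1 : IntervalIntegrable k volume 0 s :=
      (intervalIntegrable_iff_integrableOn_Ioc_of_le hs).2 hk
    have h2 := (h1.comp_sub_left s)
    simp only [sub_zero, sub_self] at h2
    exact (intervalIntegrable_iff_integrableOn_Ioc_of_le hs).1 h2.symm
  obtain ⟨C, hC1, hC⟩ := gronwall_fwd s (fun r => k (s - r)) hki (fun t => hknn _)
  refine ⟨C, hC1, ?_⟩
  intro h a ha hc hnn hineq t ht
  have hmaps : ∀ t, t ∈ Icc (0:ℝ) s → s - t ∈ Icc 0 s := by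
    intro t ht; exact ⟨by linarith [ht.2], by linarith [ht.1]⟩
  have key := hC (fun r => h (s - r)) a ha
    (hc.comp (continuous_const.sub continuous_id).continuousOn hmaps)
    (fun t ht => hnn _ (hmaps t ht))
    (fun t ht => by
      have h1 := hineq (s - t) (hmaps t ht)
      have h2 : (∫ r in Ioc 0 t, k (s - r) * h (s - r))
          = ∫ r in Ioc (s - t) s, k r * h r := hrefl (fun r => k r * h r) t ht.1 ht.2
      show h (s - t) ≤ a + ∫ r in Ioc 0 t, k (s - r) * h (s - r)
      rw [h2]; exact h1)
  have := key (s - t) (hmaps t ht)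
  simpa using this

lemma integrableOn_mul_of_boundC {k h : ℝ → ℂ} {A : Set ℝ}
    (hk : IntegrableOn k A volume) (hm : AEStronglyMeasurable h (volume.restrict A))
    (M : ℝ) (hb : ∀ x ∈ A, ‖h x‖ ≤ M) (hA : MeasurableSet A) :
    IntegrableOn (fun r => k r * h r) A volume := by
  refine Integrable.mono' ((hk.norm.const_mul M)) (hk.1.mul hm) ?_
  filter_upwards [ae_restrict_mem hA] with x hx
  rw [norm_mul]
  calc ‖k x‖ * ‖h x‖ ≤ ‖k x‖ * M :=
        mul_le_mul_of_nonneg_left (hb x hx) (norm_nonneg _)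
    _ = M * ‖k x‖ := mul_comm _ _

lemma prod_rule (s : ℝ) (hs : 0 ≤ s) (F G φ ψ : ℝ → ℂ)
    (hφ : IntegrableOn φ (Ioc 0 s) volume) (hψ : IntegrableOn ψ (Ioc 0 s) volume)
    (hF : ∀ t ∈ Icc 0 s, F t = F 0 + ∫ r in Ioc 0 t, φ r)
    (hG : ∀ t ∈ Icc 0 s, G t = G 0 + ∫ r in Ioc 0 t, ψ r) :
    F s * G s - F 0 * G 0 = ∫ r in Ioc 0 s, (φ r * G r + F r * ψ r) := by
  -- continuity of F and G on Icc 0 s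
  have hFc : ContinuousOn F (Icc 0 s) := by
    refine ContinuousOn.congr (f := fun t => F 0 + ∫ r in Ioc 0 t, φ r) ?_ hF
    exact continuousOn_const.add
      (intervalIntegral.continuousOn_primitive ((integrableOn_Icc_iff_integrableOn_Ioc (ha := enorm_ne_top)).2 hφ))
  have hGc : ContinuousOn G (Icc 0 s) := by
    refine ContinuousOn.congr (f := fun t => G 0 + ∫ r in Ioc 0 t, ψ r) ?_ hG
    exact continuousOn_const.add
      (intervalIntegral.continuousOn_primitive ((integrableOn_Icc_iff_integrableOn_Ioc (ha := enorm_ne_top)).2 hψ))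
  obtain ⟨MF, hMF⟩ := isCompact_Icc.exists_bound_of_continuousOn hFc
  obtain ⟨MG, hMG⟩ := isCompact_Icc.exists_bound_of_continuousOn hGc
  have hsub : Ioc (0:ℝ) s ⊆ Icc 0 s := Ioc_subset_Icc_self
  -- primitives
  set Pφ : ℝ → ℂ := fun t => ∫ r in Ioc 0 t, φ r with hPφ
  set Pψ : ℝ → ℂ := fun t => ∫ r in Ioc 0 t, ψ r with hPψ
  have hPφc : ContinuousOn Pφ (Icc 0 s) :=
    intervalIntegral.continuousOn_primitive ((integrableOn_Icc_iff_integrableOn_Ioc (ha := enorm_ne_top)).2 hφ)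
  have hPψc : ContinuousOn Pψ (Icc 0 s) :=
    intervalIntegral.continuousOn_primitive ((integrableOn_Icc_iff_integrableOn_Ioc (ha := enorm_ne_top)).2 hψ)
  obtain ⟨Mφ, hMφ⟩ := isCompact_Icc.exists_bound_of_continuousOn hPφc
  obtain ⟨Mψ, hMψ⟩ := isCompact_Icc.exists_bound_of_continuousOn hPψc
  set μ : Measure ℝ := volume.restrict (Ioc 0 s) with hμ
  set B : Set (ℝ × ℝ) := {p : ℝ × ℝ | p.2 ≤ p.1} with hB
  have hBmeas : MeasurableSet B := measurableSet_le measurable_snd measurable_fst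
  have hint : Integrable (fun p : ℝ × ℝ => φ p.1 * ψ p.2) (μ.prod μ) :=
    hφ.mul_prod hψ
  have hind : Integrable (B.indicator (fun p : ℝ × ℝ => φ p.1 * ψ p.2)) (μ.prod μ) :=
    hint.indicator hBmeas
  have inner1 : ∀ x ∈ Ioc (0:ℝ) s,
      (∫ y, B.indicator (fun p : ℝ × ℝ => φ p.1 * ψ p.2) (x, y) ∂μ)
        = φ x * Pψ x := by
    intro x hx
    have e1 : (fun y => B.indicator (fun p : ℝ × ℝ => φ p.1 * ψ p.2) (x, y))
        = (Iic x).indicator (fun y => φ x * ψ y) := by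
      funext y
      simp [Set.indicator_apply, hB, Set.mem_setOf_eq, Set.mem_Iic]
    rw [e1, MeasureTheory.integral_indicator measurableSet_Iic, hμ,
      Measure.restrict_restrict measurableSet_Iic]
    have e2 : Iic x ∩ Ioc 0 s = Ioc 0 x := by
      ext y; simp only [mem_inter_iff, mem_Iic, mem_Ioc]
      exact ⟨fun ⟨h1, h2, _⟩ => ⟨h2, h1⟩, fun ⟨h1, h2⟩ => ⟨h2, h1, h2.trans hx.2⟩⟩
    rw [e2, MeasureTheory.integral_const_mul]
  have inner2 : ∀ y ∈ Ioc (0:ℝ) s,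
      (∫ x, B.indicator (fun p : ℝ × ℝ => φ p.1 * ψ p.2) (x, y) ∂μ)
        = ((∫ r in Ioc 0 s, φ r) - Pφ y) * ψ y := by
    intro y hy
    have e1 : (fun x => B.indicator (fun p : ℝ × ℝ => φ p.1 * ψ p.2) (x, y))
        = (Ici y).indicator (fun x => φ x * ψ y) := by
      funext x
      simp [Set.indicator_apply, hB, Set.mem_setOf_eq, Set.mem_Ici]
    rw [e1, MeasureTheory.integral_indicator measurableSet_Ici, hμ,
      Measure.restrict_restrict measurableSet_Ici]
    have e2 : Ici y ∩ Ioc 0 s = Icc y s := by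
      ext x; simp only [mem_inter_iff, mem_Ici, mem_Ioc, mem_Icc]
      exact ⟨fun ⟨h1, _, h3⟩ => ⟨h1, h3⟩, fun ⟨h1, h2⟩ => ⟨h1, hy.1.trans_le h1, h2⟩⟩
    have e3 : (∫ r in Ioc 0 s, φ r) = Pφ y + ∫ r in Ioc y s, φ r := by
      rw [← Ioc_union_Ioc_eq_Ioc hy.1.le hy.2]
      exact setIntegral_union (Ioc_disjoint_Ioc_of_le le_rfl) measurableSet_Ioc
        (hφ.mono_set (Ioc_subset_Ioc_right hy.2))
        (hφ.mono_set (Ioc_subset_Ioc_left hy.1.le))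
    rw [e2, integral_Icc_eq_integral_Ioc, MeasureTheory.integral_mul_const, e3]
    ring
  -- Fubini identity
  have swap : (∫ x, (∫ y, B.indicator (fun p : ℝ × ℝ => φ p.1 * ψ p.2) (x, y) ∂μ) ∂μ)
      = ∫ y, (∫ x, B.indicator (fun p : ℝ × ℝ => φ p.1 * ψ p.2) (x, y) ∂μ) ∂μ := by
    rw [← integral_prod _ hind, ← integral_prod_symm _ hind]
  have L : (∫ x, (∫ y, B.indicator (fun p : ℝ × ℝ => φ p.1 * ψ p.2) (x, y) ∂μ) ∂μ)
      = ∫ x in Ioc 0 s, φ x * Pψ x := by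
    rw [hμ]
    exact setIntegral_congr_fun measurableSet_Ioc fun x hx => inner1 x hx
  have R : (∫ y, (∫ x, B.indicator (fun p : ℝ × ℝ => φ p.1 * ψ p.2) (x, y) ∂μ) ∂μ)
      = ∫ y in Ioc 0 s, ((∫ r in Ioc 0 s, φ r) - Pφ y) * ψ y := by
    rw [hμ]
    exact setIntegral_congr_fun measurableSet_Ioc fun y hy => inner2 y hy
  -- integrability facts
  have hPφm : AEStronglyMeasurable Pφ (volume.restrict (Ioc 0 s)) :=
    (hPφc.mono hsub).aestronglyMeasurable measurableSet_Ioc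
  have hPψm : AEStronglyMeasurable Pψ (volume.restrict (Ioc 0 s)) :=
    (hPψc.mono hsub).aestronglyMeasurable measurableSet_Ioc
  have hφPψ : IntegrableOn (fun r => φ r * Pψ r) (Ioc 0 s) volume :=
    integrableOn_mul_of_boundC hφ hPψm Mψ (fun x hx => hMψ x (hsub hx)) measurableSet_Ioc
  have hψPφ : IntegrableOn (fun r => ψ r * Pφ r) (Ioc 0 s) volume :=
    integrableOn_mul_of_boundC hψ hPφm Mφ (fun x hx => hMφ x (hsub hx)) measurableSet_Ioc
  -- the key identity : Tψ + Tφ = Iφ * Iψ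
  have key : (∫ x in Ioc 0 s, φ x * Pψ x) + (∫ y in Ioc 0 s, ψ y * Pφ y)
      = (∫ r in Ioc 0 s, φ r) * ∫ r in Ioc 0 s, ψ r := by
    have expand : (∫ y in Ioc 0 s, ((∫ r in Ioc 0 s, φ r) - Pφ y) * ψ y)
        = (∫ r in Ioc 0 s, φ r) * (∫ r in Ioc 0 s, ψ r) - ∫ y in Ioc 0 s, ψ y * Pφ y := by
      have e : ∀ y ∈ Ioc (0:ℝ) s, ((∫ r in Ioc 0 s, φ r) - Pφ y) * ψ y
          = (∫ r in Ioc 0 s, φ r) * ψ y - ψ y * Pφ y := fun y _ => by ring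
      rw [setIntegral_congr_fun measurableSet_Ioc e,
        integral_sub ((hψ.const_mul _)) hψPφ, MeasureTheory.integral_const_mul]
    rw [← L, swap, R, expand] at *
    ring
  -- rewrite both integrands on the set
  have hGc' : ∀ x ∈ Ioc (0:ℝ) s, φ x * G x = φ x * G 0 + φ x * Pψ x := by
    intro x hx; rw [hG x (hsub hx)]; ring
  have hFc' : ∀ x ∈ Ioc (0:ℝ) s, F x * ψ x = F 0 * ψ x + ψ x * Pφ x := by
    intro x hx; rw [hF x (hsub hx)]; ring
  have hφG : IntegrableOn (fun r => φ r * G r) (Ioc 0 s) volume :=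
    integrableOn_mul_of_boundC hφ
      ((hGc.mono hsub).aestronglyMeasurable measurableSet_Ioc) MG
      (fun x hx => hMG x (hsub hx)) measurableSet_Ioc
  have hFψ : IntegrableOn (fun r => F r * ψ r) (Ioc 0 s) volume := by
    have := integrableOn_mul_of_boundC hψ
      ((hFc.mono hsub).aestronglyMeasurable measurableSet_Ioc) MF
      (fun x hx => hMF x (hsub hx)) measurableSet_Ioc
    exact this.congr_fun (fun x _ => mul_comm _ _) measurableSet_Ioc
  have split : (∫ r in Ioc 0 s, (φ r * G r + F r * ψ r))
      = (∫ r in Ioc 0 s, φ r * G r) + ∫ r in Ioc 0 s, F r * ψ r :=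
    integral_add hφG hFψ
  have eG : (∫ r in Ioc 0 s, φ r * G r)
      = (∫ r in Ioc 0 s, φ r) * G 0 + ∫ x in Ioc 0 s, φ x * Pψ x := by
    rw [setIntegral_congr_fun measurableSet_Ioc hGc',
      integral_add (hφ.mul_const _) hφPψ, MeasureTheory.integral_mul_const]
  have eF : (∫ r in Ioc 0 s, F r * ψ r)
      = F 0 * (∫ r in Ioc 0 s, ψ r) + ∫ y in Ioc 0 s, ψ y * Pφ y := by
    rw [setIntegral_congr_fun measurableSet_Ioc hFc',
      integral_add (hψ.const_mul _) hψPφ, MeasureTheory.integral_const_mul]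
  have hFs : F s = F 0 + ∫ r in Ioc 0 s, φ r := hF s ⟨hs, le_rfl⟩
  have hGs : G s = G 0 + ∫ r in Ioc 0 s, ψ r := hG s ⟨hs, le_rfl⟩
  rw [split, eG, eF, hFs, hGs]
  linear_combination -key

lemma regularity (s : ℝ) (hs : 0 ≤ s) (q rr g : ℝ → ℂ)
    (hq : IntegrableOn q (Ioc 0 s) volume) (hr : IntegrableOn rr (Ioc 0 s) volume)
    (w w' : ℝ → ℂ) (c₀ : ℂ)
    (hw : ∀ t ∈ Icc (0:ℝ) s, w t = ∫ x in (0:ℝ)..t, w' x)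
    (hw' : ∀ t ∈ Icc (0:ℝ) s, w' t = c₀ + ∫ x in (0:ℝ)..t, g x)
    (hg : ∀ x, g x = q x * w x + rr x) :
    ContinuousOn w (Icc 0 s) ∧ ContinuousOn w' (Icc 0 s) ∧
      IntegrableOn g (Ioc 0 s) volume ∧ IntegrableOn w' (Ioc 0 s) volume ∧
      ∃ C : ℝ, ∀ t ∈ Icc 0 s,
        ‖w t‖ + ‖w' t‖ ≤ C * (‖c₀‖ + ∫ x in Ioc 0 s, ‖rr x‖) := by
  have hIocIcc : ∀ T : ℝ, Ioc (0:ℝ) T ⊆ Icc 0 T := fun T => Ioc_subset_Icc_self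
  set S : Set ℝ := {T | T ∈ Icc 0 s ∧ IntegrableOn g (Ioc 0 T) volume} with hS
  have hdc : ∀ t T, t ∈ Icc 0 s → T ∈ S → t ≤ T → t ∈ S := by
    intro t T hts hT htT
    exact ⟨hts, hT.2.mono_set (Ioc_subset_Ioc_right htT)⟩
  -- step 1 : on S-intervals everything is continuous
  have step1 : ∀ T ∈ S, ContinuousOn w (Icc 0 T) ∧ ContinuousOn w' (Icc 0 T) ∧
      IntegrableOn w' (Ioc 0 T) volume := by
    intro T hT
    have hw'eq : ∀ t ∈ Icc (0:ℝ) T, w' t = c₀ + ∫ x in Ioc 0 t, g x := by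
      intro t ht
      rw [hw' t ⟨ht.1, ht.2.trans hT.1.2⟩, intervalIntegral.integral_of_le ht.1]
    have hw'c : ContinuousOn w' (Icc 0 T) := by
      refine ContinuousOn.congr (f := fun t => c₀ + ∫ x in Ioc 0 t, g x) ?_ hw'eq
      exact continuousOn_const.add (intervalIntegral.continuousOn_primitive
        ((integrableOn_Icc_iff_integrableOn_Ioc (ha := enorm_ne_top)).2 hT.2))
    have hw'i : IntegrableOn w' (Ioc 0 T) volume :=
      (hw'c.integrableOn_Icc).mono_set (hIocIcc T)
    have hweq : ∀ t ∈ Icc (0:ℝ) T, w t = ∫ x in Ioc 0 t, w' x := by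
      intro t ht
      rw [hw t ⟨ht.1, ht.2.trans hT.1.2⟩, intervalIntegral.integral_of_le ht.1]
    have hwc : ContinuousOn w (Icc 0 T) := by
      refine ContinuousOn.congr (f := fun t => ∫ x in Ioc 0 t, w' x) ?_ hweq
      exact intervalIntegral.continuousOn_primitive
        ((integrableOn_Icc_iff_integrableOn_Ioc (ha := enorm_ne_top)).2 hw'i)
    exact ⟨hwc, hw'c, hw'i⟩
  -- Gronwall setup
  set k : ℝ → ℝ := fun x => 1 + ‖q x‖ with hk
  have hkint : IntegrableOn k (Ioc 0 s) volume := by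
    refine Integrable.add ?_ hq.norm
    exact integrableOn_const measure_Ioc_lt_top.ne
  have hknn : ∀ t, 0 ≤ k t := fun t => by positivity
  obtain ⟨C, hC1, hC⟩ := gronwall_fwd s k hkint hknn
  set a : ℝ := ‖c₀‖ + ∫ x in Ioc 0 s, ‖rr x‖ with ha
  have hann : 0 ≤ a := add_nonneg (norm_nonneg _)
    (setIntegral_nonneg measurableSet_Ioc fun x _ => norm_nonneg _)
  -- a priori bound on S-intervals
  have bound : ∀ T ∈ S, ∀ t ∈ Icc 0 T, ‖w t‖ + ‖w' t‖ ≤ C * a := by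
    intro T hT
    obtain ⟨hwc, hw'c, hw'i⟩ := step1 T hT
    have hhc : ContinuousOn (fun t => ‖w t‖ + ‖w' t‖) (Icc 0 T) := (hwc.norm).add (hw'c.norm)
    obtain ⟨Mh, hMh⟩ := isCompact_Icc.exists_bound_of_continuousOn hhc
    have hMh' : ∀ x ∈ Icc (0:ℝ) T, ‖w x‖ + ‖w' x‖ ≤ Mh := by
      intro x hx
      have := hMh x hx
      rw [Real.norm_eq_abs] at this
      exact (le_abs_self _).trans this
    have hMhnn : 0 ≤ Mh := by
      have h0T : (0:ℝ) ∈ Icc (0:ℝ) T := ⟨le_rfl, hT.1.1⟩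
      exact le_trans (add_nonneg (norm_nonneg _) (norm_nonneg _)) (hMh' 0 h0T)
    -- the honest integral inequality on [0, T]
    have ineq : ∀ t ∈ Icc (0:ℝ) T, ‖w t‖ + ‖w' t‖
        ≤ a + ∫ x in Ioc 0 t, k x * (‖w x‖ + ‖w' x‖) := by
      intro t ht
      have hsub2 : Ioc (0:ℝ) t ⊆ Icc 0 T := fun x hx => ⟨hx.1.le, hx.2.trans ht.2⟩
      have hsub3 : Ioc (0:ℝ) t ⊆ Ioc 0 T := Ioc_subset_Ioc_right ht.2
      have hgIt : IntegrableOn g (Ioc 0 t) volume := hT.2.mono_set hsub3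
      have hw'It : IntegrableOn w' (Ioc 0 t) volume := hw'i.mono_set hsub3
      have hhaesm : AEStronglyMeasurable (fun x => ‖w x‖ + ‖w' x‖)
          (volume.restrict (Ioc 0 t)) :=
        (hhc.mono hsub2).aestronglyMeasurable measurableSet_Ioc
      have hkIt : IntegrableOn k (Ioc 0 t) volume :=
        hkint.mono_set (Ioc_subset_Ioc_right (ht.2.trans hT.1.2))
      have habs : ∀ x ∈ Ioc (0:ℝ) t, |‖w x‖ + ‖w' x‖| ≤ Mh := by
        intro x hx
        rw [abs_of_nonneg (add_nonneg (norm_nonneg _) (norm_nonneg _))]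
        exact hMh' x (hsub2 hx)
      have hkh : IntegrableOn (fun x => k x * (‖w x‖ + ‖w' x‖)) (Ioc 0 t) volume :=
        integrableOn_mul_of_bound hkIt hhaesm Mh habs measurableSet_Ioc
      have hqh : IntegrableOn (fun x => ‖q x‖ * (‖w x‖ + ‖w' x‖)) (Ioc 0 t) volume :=
        integrableOn_mul_of_bound (hq.mono_set (Ioc_subset_Ioc_right (ht.2.trans hT.1.2))).norm hhaesm Mh habs measurableSet_Ioc
      have htIs : t ∈ Icc (0:ℝ) s := ⟨ht.1, ht.2.trans hT.1.2⟩
      have hwt : w t = ∫ x in Ioc 0 t, w' x := by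
        rw [hw t htIs, intervalIntegral.integral_of_le ht.1]
      have hw't : w' t = c₀ + ∫ x in Ioc 0 t, g x := by
        rw [hw' t htIs, intervalIntegral.integral_of_le ht.1]
      have e1 : ‖w t‖ ≤ ∫ x in Ioc 0 t, ‖w' x‖ := by
        rw [hwt]; exact MeasureTheory.norm_integral_le_integral_norm _
      have e2 : ‖w' t‖ ≤ ‖c₀‖ + ∫ x in Ioc 0 t, ‖g x‖ :=
        (hw't ▸ norm_add_le _ _).trans
          (add_le_add_right (MeasureTheory.norm_integral_le_integral_norm _) _)
      have e3 : (∫ x in Ioc 0 t, ‖g x‖)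
          ≤ (∫ x in Ioc 0 t, ‖q x‖ * (‖w x‖ + ‖w' x‖)) + ∫ x in Ioc 0 s, ‖rr x‖ := by
        have p1 : (∫ x in Ioc 0 t, ‖g x‖)
            ≤ ∫ x in Ioc 0 t, (‖q x‖ * (‖w x‖ + ‖w' x‖) + ‖rr x‖) := by
          refine setIntegral_mono_on hgIt.norm
            (hqh.add ((hr.mono_set (fun x hx => ⟨hx.1, hx.2.trans (ht.2.trans hT.1.2)⟩)).norm))
            measurableSet_Ioc ?_
          intro x _
          calc ‖g x‖ = ‖q x * w x + rr x‖ := by rw [hg x]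
            _ ≤ ‖q x‖ * ‖w x‖ + ‖rr x‖ := by
                refine (norm_add_le _ _).trans (add_le_add_left (le_of_eq (norm_mul _ _)) _)
            _ ≤ ‖q x‖ * (‖w x‖ + ‖w' x‖) + ‖rr x‖ := by
                have := norm_nonneg (w' x)
                nlinarith [norm_nonneg (q x)]
        have p2 : (∫ x in Ioc 0 t, (‖q x‖ * (‖w x‖ + ‖w' x‖) + ‖rr x‖))
            = (∫ x in Ioc 0 t, ‖q x‖ * (‖w x‖ + ‖w' x‖)) + ∫ x in Ioc 0 t, ‖rr x‖ :=
          integral_add hqh ((hr.mono_set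
            (fun x hx => ⟨hx.1, hx.2.trans (ht.2.trans hT.1.2)⟩)).norm)
        have p3 : (∫ x in Ioc 0 t, ‖rr x‖) ≤ ∫ x in Ioc 0 s, ‖rr x‖ := by
          refine setIntegral_mono_set hr.norm ?_ ?_
          · filter_upwards with x using norm_nonneg _
          · exact HasSubset.Subset.eventuallyLE
              (Ioc_subset_Ioc_right (ht.2.trans hT.1.2))
        linarith
      have e4 : (∫ x in Ioc 0 t, ‖w' x‖) + (∫ x in Ioc 0 t, ‖q x‖ * (‖w x‖ + ‖w' x‖))
          ≤ ∫ x in Ioc 0 t, k x * (‖w x‖ + ‖w' x‖) := by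
        rw [← integral_add hw'It.norm hqh]
        refine setIntegral_mono_on (hw'It.norm.add hqh) hkh measurableSet_Ioc ?_
        intro x _
        have h1 : ‖w' x‖ ≤ ‖w x‖ + ‖w' x‖ := le_add_of_nonneg_left (norm_nonneg _)
        have h2 : k x * (‖w x‖ + ‖w' x‖) = (‖w x‖ + ‖w' x‖) + ‖q x‖ * (‖w x‖ + ‖w' x‖) := by
          rw [hk]; ring
        linarith
      linarith
    -- extend by the min-trick and apply Gronwall
    intro t ht
    have hts : t ∈ Icc 0 s := ⟨ht.1, ht.2.trans hT.1.2⟩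
    have hmapsTo : ∀ r ∈ Icc (0:ℝ) s, min r T ∈ Icc (0:ℝ) T := fun r hr =>
      ⟨le_min hr.1 hT.1.1, min_le_right _ _⟩
    have key := hC (fun r => ‖w (min r T)‖ + ‖w' (min r T)‖) a hann
      (hhc.comp ((continuous_id.min continuous_const).continuousOn) hmapsTo)
      (fun r _ => add_nonneg (norm_nonneg _) (norm_nonneg _))
      ?_ t hts
    · simpa [min_eq_left ht.2] using key
    · intro r hr
      have hm : min r T ∈ Icc (0:ℝ) T := hmapsTo r hr
      have i1 := ineq (min r T) hm
      have i2 : (∫ x in Ioc 0 (min r T), k x * (‖w x‖ + ‖w' x‖))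
          = ∫ x in Ioc 0 (min r T), k x * (‖w (min x T)‖ + ‖w' (min x T)‖) := by
        refine setIntegral_congr_fun measurableSet_Ioc ?_
        intro x hx
        show k x * (‖w x‖ + ‖w' x‖) = k x * (‖w (min x T)‖ + ‖w' (min x T)‖)
        rw [min_eq_left (hx.2.trans (min_le_right r T))]
      have i3 : (∫ x in Ioc 0 (min r T), k x * (‖w (min x T)‖ + ‖w' (min x T)‖))
          ≤ ∫ x in Ioc 0 r, k x * (‖w (min x T)‖ + ‖w' (min x T)‖) := by
        refine setIntegral_mono_set ?_ ?_ ?_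
        · refine integrableOn_mul_of_bound (hkint.mono_set (Ioc_subset_Ioc_right hr.2)) ?_ Mh ?_ measurableSet_Ioc
          · exact ((hhc.comp ((continuous_id.min continuous_const).continuousOn) hmapsTo).mono
              (fun x hx => ⟨hx.1.le, hx.2.trans hr.2⟩)).aestronglyMeasurable measurableSet_Ioc
          · intro x hx
            rw [abs_of_nonneg (add_nonneg (norm_nonneg _) (norm_nonneg _))]
            exact hMh' _ (hmapsTo x ⟨hx.1.le, hx.2.trans hr.2⟩)
        · filter_upwards with x
          exact mul_nonneg (hknn x) (add_nonneg (norm_nonneg _) (norm_nonneg _))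
        · exact HasSubset.Subset.eventuallyLE (Ioc_subset_Ioc_right (min_le_left r T))
      calc ‖w (min r T)‖ + ‖w' (min r T)‖
          ≤ a + ∫ x in Ioc 0 (min r T), k x * (‖w x‖ + ‖w' x‖) := i1
        _ = a + ∫ x in Ioc 0 (min r T), k x * (‖w (min x T)‖ + ‖w' (min x T)‖) := by rw [i2]
        _ ≤ a + ∫ x in Ioc 0 r, k x * (‖w (min x T)‖ + ‖w' (min x T)‖) := by linarith [i3]
  -- now the global argument
  have hw'const : ∀ t ∈ Icc 0 s, t ∉ S → w' t = c₀ := by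
    intro t ht htS
    have hni : ¬ IntegrableOn g (Ioc 0 t) volume := fun hint => htS ⟨ht, hint⟩
    rw [hw' t ht, intervalIntegral.integral_of_le ht.1, integral_undef hni, add_zero]
  have hSord : S.OrdConnected := by
    refine ⟨fun x hx y hy z hz => ?_⟩
    exact hdc z y ⟨hx.1.1.trans hz.1, hz.2.trans hy.1.2⟩ hy hz.2
  have hSmeas : MeasurableSet S := hSord.measurableSet
  have h0S : (0:ℝ) ∈ S := by
    refine ⟨⟨le_rfl, hs⟩, ?_⟩
    rw [Ioc_self]
    exact integrableOn_empty
  -- continuity of w' on S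
  have hw'S : ContinuousOn w' S := by
    intro t htS
    by_cases hex : ∃ T ∈ S, t < T
    · obtain ⟨T, hTS, htT⟩ := hex
      have hcont := (step1 T hTS).2.1
      have h1 : ContinuousWithinAt w' (Icc 0 T) t :=
        hcont t ⟨htS.1.1, htT.le⟩
      refine (h1.mono_of_mem_nhdsWithin ?_)
      have : S ∩ Iio T ⊆ Icc 0 T := fun x hx => ⟨hx.1.1.1, hx.2.le⟩
      exact Filter.mem_of_superset
        (inter_mem_nhdsWithin S (Iio_mem_nhds htT)) this
    · push_neg at hex
      have hsub : S ⊆ Icc 0 t := fun x hx => ⟨hx.1.1, hex x hx⟩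
      exact ((step1 t htS).2.1.mono hsub) t htS
  -- w' is bounded and measurable on [0, s]
  have hw'bdd : ∀ t ∈ Icc (0:ℝ) s, ‖w' t‖ ≤ C * a + ‖c₀‖ := by
    intro t ht
    by_cases htS : t ∈ S
    · have := bound t htS t ⟨ht.1, le_rfl⟩
      have h2 : ‖w' t‖ ≤ C * a := le_trans (le_add_of_nonneg_left (norm_nonneg _)) this
      linarith [norm_nonneg c₀]
    · rw [hw'const t ht htS]
      have : 0 ≤ C * a := mul_nonneg (le_trans zero_le_one hC1) hann
      linarith
  have hw'aesm : AEStronglyMeasurable w' (volume.restrict (Ioc 0 s)) := by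
    have hsplit : Ioc (0:ℝ) s = (Ioc 0 s ∩ S) ∪ (Ioc 0 s \ S) := (inter_union_diff _ _).symm
    rw [hsplit, aestronglyMeasurable_union_iff]
    constructor
    · exact (hw'S.mono inter_subset_right).aestronglyMeasurable
        (measurableSet_Ioc.inter hSmeas)
    · refine (aestronglyMeasurable_const (b := c₀)).congr ?_
      refine (ae_restrict_iff' (measurableSet_Ioc.diff hSmeas)).2 ?_
      filter_upwards with x hx
      exact (hw'const x (Ioc_subset_Icc_self hx.1) hx.2).symm
  have hw'int : IntegrableOn w' (Ioc 0 s) volume := by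
    refine Integrable.mono'
      (integrableOn_const measure_Ioc_lt_top.ne : IntegrableOn
        (fun _ => C * a + ‖c₀‖) (Ioc 0 s) volume) hw'aesm ?_
    filter_upwards [ae_restrict_mem measurableSet_Ioc] with x hx
    exact hw'bdd x (Ioc_subset_Icc_self hx)
  -- w is a continuous primitive on [0, s]
  have hweq : ∀ t ∈ Icc (0:ℝ) s, w t = ∫ x in Ioc 0 t, w' x := by
    intro t ht
    rw [hw t ht, intervalIntegral.integral_of_le ht.1]
  have hwc : ContinuousOn w (Icc 0 s) := by
    refine ContinuousOn.congr (f := fun t => ∫ x in Ioc 0 t, w' x) ?_ hweq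
    exact intervalIntegral.continuousOn_primitive
      ((integrableOn_Icc_iff_integrableOn_Ioc (ha := enorm_ne_top)).2 hw'int)
  obtain ⟨Mw, hMw⟩ := isCompact_Icc.exists_bound_of_continuousOn hwc
  -- g is integrable on (0, s]
  have hgint : IntegrableOn g (Ioc 0 s) volume := by
    have hgfun : g = fun x => q x * w x + rr x := funext hg
    rw [hgfun]
    have haesm : AEStronglyMeasurable (fun x => q x * w x + rr x)
        (volume.restrict (Ioc 0 s)) :=
      (hq.1.mul ((hwc.mono Ioc_subset_Icc_self).aestronglyMeasurable
        measurableSet_Ioc)).add hr.1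
    refine Integrable.mono' ((hq.norm.mul_const Mw).add hr.norm) haesm ?_
    filter_upwards [ae_restrict_mem measurableSet_Ioc] with x hx
    calc ‖q x * w x + rr x‖ ≤ ‖q x‖ * ‖w x‖ + ‖rr x‖ := by
          refine (norm_add_le _ _).trans (add_le_add_left (le_of_eq (norm_mul _ _)) _)
      _ ≤ ‖q x‖ * Mw + ‖rr x‖ := by
          have hb := hMw x (Ioc_subset_Icc_self hx)
          have := norm_nonneg (q x)
          nlinarith [norm_nonneg (w x)]
  have hsS : s ∈ S := ⟨⟨hs, le_rfl⟩, hgint⟩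
  exact ⟨hwc, (step1 s hsS).2.1, hgint, hw'int, C, fun t ht => bound s hsS t ht⟩

lemma integrable_conj' {f : ℝ → ℂ} {μ : Measure ℝ} (h : Integrable f μ) :
    Integrable (fun x => (starRingEnd ℂ) (f x)) μ := by
  refine ⟨Complex.continuous_conj.comp_aestronglyMeasurable h.1, ?_⟩
  have h2 := h.2
  simp only [HasFiniteIntegral] at h2 ⊢
  simpa using h2

/-- non-orthogonality criterion, half line: Let `V` be locally integrable on
`[0,∞)`, `E ∈ ℝ`, `f ∈ L²(0,∞)` supported in `[0,s]`. For `z` in the upper half plane let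
`u z = (H_D - z)⁻¹ f`, i.e. the square-integrable solution of `-u'' + (V - z)u = f` with
`u(0) = 0`. If `inf { ‖(u_z(s), u_z'(s))‖ : Im z > 0, |z - E| ≤ δ } → 0` as `δ → 0+`, then
`⟨u_{0,E}, f⟩ = ∫_0^∞ u_{0,E}(t) conj(f(t)) dt = 0`, where `u_{0,E}` solves
`-u'' + Vu = Eu`, `u(0) = 0`, `u'(0) = 1`. -/
theorem stmt16 (V : ℝ → ℝ) (hV : LocallyIntegrableOn V (Set.Ici 0) volume)
    (E s : ℝ) (hs : 0 < s)
    (f : ℝ → ℂ)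
    (hf2 : MemLp f 2 (volume.restrict (Set.Ioi (0 : ℝ))))
    (hsupp : ∀ t : ℝ, t ∉ Set.Icc 0 s → f t = 0)
    (u u' : ℂ → ℝ → ℂ)
    (hsol : ∀ z : ℂ, 0 < z.im →
      u z 0 = 0 ∧
      (∀ t : ℝ, u z t = ∫ r in (0:ℝ)..t, u' z r) ∧
      (∀ t : ℝ, u' z t = u' z 0 + ∫ r in (0:ℝ)..t, (((V r : ℂ) - z) * u z r - f r)) ∧
      IntegrableOn (fun t => ‖u z t‖ ^ 2) (Set.Ioi 0) volume)
    (hinf : ∀ δ > (0:ℝ), ∀ ε > (0:ℝ), ∃ z : ℂ,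
      0 < z.im ∧ ‖z - (E : ℂ)‖ ≤ δ ∧ ‖u z s‖ + ‖u' z s‖ < ε)
    (u0 u0' : ℝ → ℂ)
    (h0 : u0 0 = 0)
    (h0sol : ∀ t : ℝ, u0 t = ∫ r in (0:ℝ)..t, u0' r)
    (h0sol' : ∀ t : ℝ, u0' t = 1 + ∫ r in (0:ℝ)..t, ((V r : ℂ) - (E : ℂ)) * u0 r) :
    ∫ t in Set.Ioi (0 : ℝ), u0 t * (starRingEnd ℂ) (f t) = 0 := by
  have hs0 : (0:ℝ) ≤ s := hs.le
  have hVint : IntegrableOn V (Ioc 0 s) volume :=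
    (hV.integrableOn_compact_subset (fun x (hx : x ∈ Icc 0 s) => hx.1)
      isCompact_Icc).mono_set Ioc_subset_Icc_self
  have hVC : IntegrableOn (fun x => (V x : ℂ)) (Ioc 0 s) volume := hVint.ofReal
  haveI : IsFiniteMeasure (volume.restrict (Ioc (0:ℝ) s)) :=
    ⟨by rw [Measure.restrict_apply_univ]; exact measure_Ioc_lt_top⟩
  have hfint : IntegrableOn f (Ioc 0 s) volume := by
    have hinter : Ioc (0:ℝ) s ∩ Ioi 0 = Ioc 0 s := inter_eq_left.mpr fun x hx => hx.1
    have h1 : MemLp f 2 (volume.restrict (Ioc (0:ℝ) s)) := by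
      have h2 := hf2.restrict (Ioc (0:ℝ) s)
      rwa [Measure.restrict_restrict measurableSet_Ioc, hinter] at h2
    exact h1.integrable (by norm_num)
  -- regularity for u0
  have hq0 : IntegrableOn (fun x => (V x : ℂ) - (E:ℂ)) (Ioc 0 s) volume :=
    hVC.sub (integrableOn_const measure_Ioc_lt_top.ne)
  obtain ⟨hu0c, hu0'c, hg0int, hu0'int, _⟩ :=
    regularity s hs0 (fun x => (V x : ℂ) - (E:ℂ)) (fun _ => 0)
      (fun x => ((V x : ℂ) - (E:ℂ)) * u0 x) hq0 integrableOn_zero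
      u0 u0' 1 (fun t _ => h0sol t) (fun t _ => h0sol' t)
      (fun x => (add_zero _).symm)
  have hu0eq : ∀ t ∈ Icc (0:ℝ) s, u0 t = ∫ x in Ioc 0 t, u0' x := fun t ht => by
    rw [h0sol t, intervalIntegral.integral_of_le ht.1]
  have hu0'eq : ∀ t ∈ Icc (0:ℝ) s, u0' t = 1 + ∫ x in Ioc 0 t, ((V x : ℂ) - (E:ℂ)) * u0 x :=
    fun t ht => by rw [h0sol' t, intervalIntegral.integral_of_le ht.1]
  -- realness of u0 on [0, s]
  have hconj : ∀ t ∈ Icc (0:ℝ) s, (starRingEnd ℂ) (u0 t) = u0 t := by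
    have hcw : ∀ t ∈ Icc (0:ℝ) s, (u0 t - (starRingEnd ℂ) (u0 t))
        = ∫ x in (0:ℝ)..t, (u0' x - (starRingEnd ℂ) (u0' x)) := by
      intro t ht
      have hii : IntegrableOn u0' (Ioc 0 t) volume :=
        hu0'int.mono_set (Ioc_subset_Ioc_right ht.2)
      rw [intervalIntegral.integral_of_le ht.1, integral_sub hii (integrable_conj' hii),
        integral_conj, ← hu0eq t ht]
    have hcw' : ∀ t ∈ Icc (0:ℝ) s, (u0' t - (starRingEnd ℂ) (u0' t))
        = 0 + ∫ x in (0:ℝ)..t, ((V x : ℂ) - (E:ℂ)) * (u0 x - (starRingEnd ℂ) (u0 x)) := by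
      intro t ht
      have hii : IntegrableOn (fun x => ((V x : ℂ) - (E:ℂ)) * u0 x) (Ioc 0 t) volume :=
        hg0int.mono_set (Ioc_subset_Ioc_right ht.2)
      have e : ∀ x : ℝ, ((V x : ℂ) - (E:ℂ)) * (u0 x - (starRingEnd ℂ) (u0 x))
          = ((V x : ℂ) - (E:ℂ)) * u0 x
            - (starRingEnd ℂ) (((V x : ℂ) - (E:ℂ)) * u0 x) := by
        intro x
        rw [map_mul, map_sub, Complex.conj_ofReal, Complex.conj_ofReal]
        ring
      rw [zero_add, intervalIntegral.integral_of_le ht.1]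
      simp only [e]
      rw [integral_sub hii (integrable_conj' hii), integral_conj, hu0'eq t ht, map_add,
        map_one]
      ring
    obtain ⟨_, _, _, _, Cr, hCr⟩ :=
      regularity s hs0 (fun x => (V x : ℂ) - (E:ℂ)) (fun _ => 0)
        (fun x => ((V x : ℂ) - (E:ℂ)) * (u0 x - (starRingEnd ℂ) (u0 x))) hq0 integrableOn_zero
        (fun t => u0 t - (starRingEnd ℂ) (u0 t))
        (fun t => u0' t - (starRingEnd ℂ) (u0' t)) 0 hcw hcw'
        (fun x => (add_zero _).symm)
    intro t ht
    have hb := hCr t ht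
    simp only [norm_zero, MeasureTheory.integral_zero, add_zero, mul_zero] at hb
    have h1 : ‖u0 t - (starRingEnd ℂ) (u0 t)‖ = 0 :=
      le_antisymm (by linarith [norm_nonneg (u0' t - (starRingEnd ℂ) (u0' t))]) (norm_nonneg _)
    have h2 := norm_eq_zero.1 h1
    have h3 := sub_eq_zero.1 h2
    exact h3.symm
  -- constants
  set Fn : ℝ := ∫ x in Ioc 0 s, ‖f x‖ with hFn
  have hFnnn : 0 ≤ Fn := setIntegral_nonneg measurableSet_Ioc fun x _ => norm_nonneg _
  set Iu0 : ℝ := ∫ x in Ioc 0 s, ‖u0 x‖ with hIu0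
  have hIu0nn : 0 ≤ Iu0 := setIntegral_nonneg measurableSet_Ioc fun x _ => norm_nonneg _
  have hkbarint : IntegrableOn (fun x => 1 + |V x| + (|E| + 1)) (Ioc 0 s) volume := by
    refine Integrable.add (Integrable.add ?_ hVint.abs) ?_ <;>
      exact integrableOn_const measure_Ioc_lt_top.ne
  obtain ⟨C₂, hC₂1, hC₂⟩ := gronwall_bwd s (fun x => 1 + |V x| + (|E| + 1)) hkbarint
    (fun t => by positivity)
  set B : ℝ := C₂ * (1 + Fn) with hB
  have hBnn : 0 ≤ B := mul_nonneg (zero_le_one.trans hC₂1) (by linarith)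
  obtain ⟨Mu0, hMu0⟩ := isCompact_Icc.exists_bound_of_continuousOn hu0c
  have hu0aesm : AEStronglyMeasurable u0 (volume.restrict (Ioc 0 s)) :=
    (hu0c.mono Ioc_subset_Icc_self).aestronglyMeasurable measurableSet_Ioc
  have hu0nint : IntegrableOn (fun x => ‖u0 x‖) (Ioc 0 s) volume :=
    ((hu0c.norm).integrableOn_Icc).mono_set Ioc_subset_Icc_self
  have hfu0int : IntegrableOn (fun x => f x * u0 x) (Ioc 0 s) volume :=
    integrableOn_mul_of_boundC hfint hu0aesm Mu0
      (fun x hx => hMu0 x (Ioc_subset_Icc_self hx)) measurableSet_Ioc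
  set J : ℂ := ∫ x in Ioc 0 s, f x * u0 x with hJ
  -- the main estimate
  have claim : ∀ e > (0:ℝ), ‖J‖ ≤ e := by
    intro e he
    set D : ℝ := ‖u0 s‖ + ‖u0' s‖ + B * Iu0 + 1 with hD
    have hBIu : 0 ≤ B * Iu0 := mul_nonneg hBnn hIu0nn
    have hDpos : 0 < D := by
      have := norm_nonneg (u0 s); have := norm_nonneg (u0' s); linarith
    set δ : ℝ := min 1 (e / D) with hδ
    have hδpos : 0 < δ := lt_min one_pos (div_pos he hDpos)
    have hδ1 : δ ≤ 1 := min_le_left _ _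
    have hδe : δ ≤ e / D := min_le_right _ _
    obtain ⟨z, hzim, hzE, hzsmall⟩ := hinf δ hδpos δ hδpos
    obtain ⟨hz0, hzw, hzw', _⟩ := hsol z hzim
    have hqz : IntegrableOn (fun x => (V x : ℂ) - z) (Ioc 0 s) volume :=
      hVC.sub (integrableOn_const measure_Ioc_lt_top.ne)
    obtain ⟨huzc, huz'c, hgzint, huz'int, _⟩ :=
      regularity s hs0 (fun x => (V x:ℂ) - z) (fun x => -(f x))
        (fun x => ((V x:ℂ) - z) * u z x - f x) hqz hfint.neg
        (u z) (u' z) (u' z 0) (fun t _ => hzw t) (fun t _ => hzw' t)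
        (fun x => by ring)
    have hueq : ∀ t ∈ Icc (0:ℝ) s, u z t = ∫ x in Ioc 0 t, u' z x := fun t ht => by
      rw [hzw t, intervalIntegral.integral_of_le ht.1]
    have hu'eq : ∀ t ∈ Icc (0:ℝ) s, u' z t
        = u' z 0 + ∫ x in Ioc 0 t, (((V x:ℂ) - z) * u z x - f x) := fun t ht => by
      rw [hzw' t, intervalIntegral.integral_of_le ht.1]
    -- norm bound on z
    have hzn : ‖z‖ ≤ |E| + 1 := by
      have h1 : ‖z - (E:ℂ)‖ ≤ δ := by exact hzE
      calc ‖z‖ = ‖(z - (E:ℂ)) + (E:ℂ)‖ := by rw [sub_add_cancel]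
        _ ≤ ‖z - (E:ℂ)‖ + ‖(E:ℂ)‖ := norm_add_le _ _
        _ ≤ δ + |E| := add_le_add h1
            (le_of_eq (by rw [Complex.norm_real, Real.norm_eq_abs]))
        _ ≤ |E| + 1 := by linarith
    -- backward integral inequality
    obtain ⟨Mz, hMz⟩ := isCompact_Icc.exists_bound_of_continuousOn
      ((huzc.norm).add (huz'c.norm))
    have hMz' : ∀ x ∈ Icc (0:ℝ) s, ‖u z x‖ + ‖u' z x‖ ≤ Mz := by
      intro x hx
      have := hMz x hx
      rw [Real.norm_eq_abs] at this
      exact (le_abs_self _).trans this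
    have hbw : ∀ t ∈ Icc (0:ℝ) s, ‖u z t‖ + ‖u' z t‖
        ≤ ((‖u z s‖ + ‖u' z s‖) + Fn)
          + ∫ x in Ioc t s, (1 + |V x| + (|E| + 1)) * (‖u z x‖ + ‖u' z x‖) := by
      intro t ht
      have hsub : Ioc t s ⊆ Ioc 0 s := Ioc_subset_Ioc_left ht.1
      have hw'I : IntegrableOn (u' z) (Ioc t s) volume := huz'int.mono_set hsub
      have hgzI : IntegrableOn (fun x => ((V x:ℂ) - z) * u z x - f x) (Ioc t s) volume :=
        hgzint.mono_set hsub
      have hst : u z s = u z t + ∫ x in Ioc t s, u' z x := by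
        rw [hueq s ⟨hs0, le_rfl⟩, hueq t ht, ← Ioc_union_Ioc_eq_Ioc ht.1 ht.2]
        exact setIntegral_union (Ioc_disjoint_Ioc_of_le le_rfl) measurableSet_Ioc
          (huz'int.mono_set (Ioc_subset_Ioc_right ht.2)) hw'I
      have hst' : u' z s = u' z t + ∫ x in Ioc t s, (((V x:ℂ) - z) * u z x - f x) := by
        rw [hu'eq s ⟨hs0, le_rfl⟩, hu'eq t ht, ← Ioc_union_Ioc_eq_Ioc ht.1 ht.2,
          setIntegral_union (Ioc_disjoint_Ioc_of_le le_rfl) measurableSet_Ioc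
            (hgzint.mono_set (Ioc_subset_Ioc_right ht.2)) hgzI]
        ring
      have e1 : ‖u z t‖ ≤ ‖u z s‖ + ∫ x in Ioc t s, ‖u' z x‖ := by
        have h1 : u z t = u z s - ∫ x in Ioc t s, u' z x := by rw [hst]; ring
        rw [h1]
        exact (norm_sub_le _ _).trans
          (add_le_add_right (MeasureTheory.norm_integral_le_integral_norm _) _)
      have e2 : ‖u' z t‖ ≤ ‖u' z s‖
          + ∫ x in Ioc t s, ‖((V x:ℂ) - z) * u z x - f x‖ := by
        have h1 : u' z t = u' z s - ∫ x in Ioc t s, (((V x:ℂ) - z) * u z x - f x) := by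
          rw [hst']; ring
        rw [h1]
        exact (norm_sub_le _ _).trans
          (add_le_add_right (MeasureTheory.norm_integral_le_integral_norm _) _)
      have hkh : IntegrableOn
          (fun x => (1 + |V x| + (|E| + 1)) * (‖u z x‖ + ‖u' z x‖)) (Ioc t s) volume := by
        refine integrableOn_mul_of_bound (hkbarint.mono_set hsub) ?_ Mz ?_ measurableSet_Ioc
        · exact (((huzc.norm).add (huz'c.norm)).mono
            (hsub.trans Ioc_subset_Icc_self)).aestronglyMeasurable measurableSet_Ioc
        · intro x hx
          rw [abs_of_nonneg (add_nonneg (norm_nonneg _) (norm_nonneg _))]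
          exact hMz' x (Ioc_subset_Icc_self (hsub hx))
      have e3 : (∫ x in Ioc t s, ‖u' z x‖)
            + (∫ x in Ioc t s, ‖((V x:ℂ) - z) * u z x - f x‖)
          ≤ (∫ x in Ioc t s, (1 + |V x| + (|E| + 1)) * (‖u z x‖ + ‖u' z x‖)) + Fn := by
        have e4 : (∫ x in Ioc t s, (‖u' z x‖ + ‖((V x:ℂ) - z) * u z x - f x‖))
            ≤ ∫ x in Ioc t s,
              ((1 + |V x| + (|E| + 1)) * (‖u z x‖ + ‖u' z x‖) + ‖f x‖) := by
          refine setIntegral_mono_on (hw'I.norm.add hgzI.norm)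
            (hkh.add ((hfint.mono_set hsub).norm)) measurableSet_Ioc ?_
          intro x _
          have p1 : ‖((V x:ℂ) - z) * u z x - f x‖
              ≤ (|V x| + (|E| + 1)) * ‖u z x‖ + ‖f x‖ := by
            refine (norm_sub_le _ _).trans ?_
            have p2 : ‖((V x:ℂ) - z) * u z x‖ ≤ (|V x| + (|E| + 1)) * ‖u z x‖ := by
              rw [norm_mul]
              refine mul_le_mul_of_nonneg_right ?_ (norm_nonneg _)
              refine (norm_sub_le _ _).trans ?_
              have : ‖((V x : ℝ) : ℂ)‖ = |V x| := by
                rw [Complex.norm_real, Real.norm_eq_abs]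
              rw [this]
              linarith [hzn]
            linarith
          have p3 : 0 ≤ |V x| + (|E| + 1) := by positivity
          nlinarith [norm_nonneg (u z x), norm_nonneg (u' z x)]
        rw [integral_add hw'I.norm hgzI.norm] at e4
        rw [integral_add hkh ((hfint.mono_set hsub).norm)] at e4
        have e6 : (∫ x in Ioc t s, ‖f x‖) ≤ Fn := by
          refine setIntegral_mono_set hfint.norm ?_ ?_
          · filter_upwards with x using norm_nonneg _
          · exact HasSubset.Subset.eventuallyLE hsub
        linarith
      linarith
    -- uniform bound from backward Gronwall
    have hB2 : ∀ t ∈ Icc (0:ℝ) s, ‖u z t‖ + ‖u' z t‖ ≤ B := by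
      have happ := hC₂ (fun t => ‖u z t‖ + ‖u' z t‖) ((‖u z s‖ + ‖u' z s‖) + Fn)
        (by positivity) ((huzc.norm).add (huz'c.norm))
        (fun t _ => add_nonneg (norm_nonneg _) (norm_nonneg _)) hbw
      intro t ht
      calc ‖u z t‖ + ‖u' z t‖ ≤ C₂ * ((‖u z s‖ + ‖u' z s‖) + Fn) := happ t ht
        _ ≤ C₂ * (1 + Fn) := by
            have hzs : ‖u z s‖ + ‖u' z s‖ ≤ 1 := le_trans hzsmall.le hδ1
            exact mul_le_mul_of_nonneg_left (by linarith) (zero_le_one.trans hC₂1)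
        _ = B := rfl
    -- Wronskian identities via the product rule
    obtain ⟨Mz2, hMz2⟩ := isCompact_Icc.exists_bound_of_continuousOn huzc
    have huzaesm : AEStronglyMeasurable (u z) (volume.restrict (Ioc 0 s)) :=
      (huzc.mono Ioc_subset_Icc_self).aestronglyMeasurable measurableSet_Ioc
    have id1 := prod_rule s hs0 (u z) u0' (u' z)
      (fun x => ((V x : ℂ) - (E:ℂ)) * u0 x) huz'int hg0int
      (fun t ht => by rw [hz0, zero_add]; exact hueq t ht)
      (fun t ht => by
        have h00 : u0' 0 = 1 := by
          rw [h0sol' 0, intervalIntegral.integral_same, add_zero]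
        rw [h00]; exact hu0'eq t ht)
    have id2 := prod_rule s hs0 (u' z) u0
      (fun x => ((V x:ℂ) - z) * u z x - f x) u0' hgzint hu0'int
      (fun t ht => hu'eq t ht)
      (fun t ht => by rw [h0, zero_add]; exact hu0eq t ht)
    have i_a : IntegrableOn (fun x => u' z x * u0' x) (Ioc 0 s) volume :=
      ((huz'c.mul hu0'c).integrableOn_Icc).mono_set Ioc_subset_Icc_self
    have i_b : IntegrableOn (fun x => u z x * (((V x:ℂ) - (E:ℂ)) * u0 x)) (Ioc 0 s) volume := by
      have h1 := integrableOn_mul_of_boundC hg0int huzaesm Mz2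
        (fun x hx => hMz2 x (Ioc_subset_Icc_self hx)) measurableSet_Ioc
      exact h1.congr_fun (fun x _ => mul_comm _ _) measurableSet_Ioc
    have i_c : IntegrableOn (fun x => (((V x:ℂ) - z) * u z x - f x) * u0 x) (Ioc 0 s) volume :=
      integrableOn_mul_of_boundC hgzint hu0aesm Mu0
        (fun x hx => hMu0 x (Ioc_subset_Icc_self hx)) measurableSet_Ioc
    have i_uzu0 : IntegrableOn (fun x => u z x * u0 x) (Ioc 0 s) volume :=
      ((huzc.mul hu0c).integrableOn_Icc).mono_set Ioc_subset_Icc_self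
    have hWr : u z s * u0' s - u' z s * u0 s
        = (z - (E:ℂ)) * (∫ x in Ioc 0 s, u z x * u0 x) + J := by
      rw [hz0, zero_mul, sub_zero] at id1
      rw [h0, mul_zero, sub_zero] at id2
      have h3 : u z s * u0' s - u' z s * u0 s
          = ∫ x in Ioc 0 s, ((u' z x * u0' x + u z x * (((V x:ℂ) - (E:ℂ)) * u0 x))
              - ((((V x:ℂ) - z) * u z x - f x) * u0 x + u' z x * u0' x)) := by
        have i_ab : IntegrableOn (fun x => u' z x * u0' x
            + u z x * (((V x:ℂ) - (E:ℂ)) * u0 x)) (Ioc 0 s) volume := i_a.add i_b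
        have i_ca : IntegrableOn (fun x => (((V x:ℂ) - z) * u z x - f x) * u0 x
            + u' z x * u0' x) (Ioc 0 s) volume := i_c.add i_a
        rw [integral_sub i_ab i_ca, ← id1, ← id2]
      have h4 : ∀ x ∈ Ioc (0:ℝ) s, ((u' z x * u0' x + u z x * (((V x:ℂ) - (E:ℂ)) * u0 x))
              - ((((V x:ℂ) - z) * u z x - f x) * u0 x + u' z x * u0' x))
          = (z - (E:ℂ)) * (u z x * u0 x) + f x * u0 x := fun x _ => by ring
      rw [h3, setIntegral_congr_fun measurableSet_Ioc h4,
        integral_add ((i_uzu0.const_mul _)) hfu0int, MeasureTheory.integral_const_mul]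
    -- norm estimates
    have n1 : ‖∫ x in Ioc 0 s, u z x * u0 x‖ ≤ B * Iu0 := by
      refine (MeasureTheory.norm_integral_le_integral_norm _).trans ?_
      have p : (∫ x in Ioc 0 s, ‖u z x * u0 x‖) ≤ ∫ x in Ioc 0 s, B * ‖u0 x‖ := by
        refine setIntegral_mono_on i_uzu0.norm (hu0nint.const_mul _) measurableSet_Ioc ?_
        intro x hx
        rw [norm_mul]
        have hb := hB2 x (Ioc_subset_Icc_self hx)
        have h1 : ‖u z x‖ ≤ B :=
          le_trans (le_add_of_nonneg_right (norm_nonneg _)) hb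
        exact mul_le_mul_of_nonneg_right h1 (norm_nonneg _)
      rwa [MeasureTheory.integral_const_mul] at p
    have hz1 : ‖u z s‖ ≤ δ := by
      have := norm_nonneg (u' z s); linarith [hzsmall]
    have hz2 : ‖u' z s‖ ≤ δ := by
      have := norm_nonneg (u z s); linarith [hzsmall]
    have hJb : ‖J‖ ≤ δ * ‖u0' s‖ + δ * ‖u0 s‖ + δ * (B * Iu0) := by
      have hJeq : J = (u z s * u0' s - u' z s * u0 s)
          - (z - (E:ℂ)) * ∫ x in Ioc 0 s, u z x * u0 x := by
        rw [hWr]; ring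
      rw [hJeq]
      have q1 : ‖(u z s * u0' s - u' z s * u0 s)
            - (z - (E:ℂ)) * ∫ x in Ioc 0 s, u z x * u0 x‖
          ≤ ‖u z s‖ * ‖u0' s‖ + ‖u' z s‖ * ‖u0 s‖
            + ‖z - (E:ℂ)‖ * ‖∫ x in Ioc 0 s, u z x * u0 x‖ := by
        calc ‖(u z s * u0' s - u' z s * u0 s)
              - (z - (E:ℂ)) * ∫ x in Ioc 0 s, u z x * u0 x‖
            ≤ ‖u z s * u0' s - u' z s * u0 s‖
              + ‖(z - (E:ℂ)) * ∫ x in Ioc 0 s, u z x * u0 x‖ := norm_sub_le _ _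
          _ ≤ (‖u z s * u0' s‖ + ‖u' z s * u0 s‖)
              + ‖(z - (E:ℂ)) * ∫ x in Ioc 0 s, u z x * u0 x‖ := by
              linarith [norm_sub_le (u z s * u0' s) (u' z s * u0 s)]
          _ = ‖u z s‖ * ‖u0' s‖ + ‖u' z s‖ * ‖u0 s‖
              + ‖z - (E:ℂ)‖ * ‖∫ x in Ioc 0 s, u z x * u0 x‖ := by
              rw [norm_mul, norm_mul, norm_mul]
      have hzd : ‖z - (E:ℂ)‖ ≤ δ := by exact hzE
      have hiznn := norm_nonneg (∫ x in Ioc 0 s, u z x * u0 x)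
      refine q1.trans ?_
      have r1 : ‖u z s‖ * ‖u0' s‖ ≤ δ * ‖u0' s‖ :=
        mul_le_mul_of_nonneg_right hz1 (norm_nonneg _)
      have r2 : ‖u' z s‖ * ‖u0 s‖ ≤ δ * ‖u0 s‖ :=
        mul_le_mul_of_nonneg_right hz2 (norm_nonneg _)
      have r3 : ‖z - (E:ℂ)‖ * ‖∫ x in Ioc 0 s, u z x * u0 x‖ ≤ δ * (B * Iu0) := by
        have := mul_le_mul hzd n1 hiznn hδpos.le
        linarith
      linarith
    -- conclude
    have hfinal : δ * ‖u0' s‖ + δ * ‖u0 s‖ + δ * (B * Iu0) ≤ e := by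
      have h1 : δ * ‖u0' s‖ + δ * ‖u0 s‖ + δ * (B * Iu0) = δ * (D - 1) := by
        rw [hD]; ring
      have h2 : δ * (D - 1) ≤ (e / D) * (D - 1) :=
        mul_le_mul_of_nonneg_right hδe (by
          have := norm_nonneg (u0 s); have := norm_nonneg (u0' s); linarith)
      have h3 : (e / D) * (D - 1) ≤ (e / D) * D :=
        mul_le_mul_of_nonneg_left (by linarith) (le_of_lt (div_pos he hDpos))
      have h4 : (e / D) * D = e := div_mul_cancel₀ e hDpos.ne'
      linarith
    linarith [hJb, hfinal]
  -- J = 0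
  have hJ0 : J = 0 := by
    by_contra hne
    have h1 : 0 < ‖J‖ := norm_pos_iff.2 hne
    have h2 := claim (‖J‖ / 2) (by linarith)
    linarith
  -- conclude
  have htarget : ∫ t in Ioi (0:ℝ), u0 t * (starRingEnd ℂ) (f t)
      = ∫ t in Ioc 0 s, u0 t * (starRingEnd ℂ) (f t) := by
    refine setIntegral_eq_of_subset_of_forall_diff_eq_zero measurableSet_Ioi
      (fun x hx => hx.1) ?_
    intro x hx
    have hxs : x ∉ Icc 0 s := fun hmem => hx.2 ⟨hx.1, hmem.2⟩
    rw [hsupp x hxs, map_zero, mul_zero]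
  have hcongr : ∀ x ∈ Ioc (0:ℝ) s, u0 x * (starRingEnd ℂ) (f x)
      = (starRingEnd ℂ) (f x * u0 x) := by
    intro x hx
    rw [map_mul, hconj x (Ioc_subset_Icc_self hx)]
    ring
  rw [htarget, setIntegral_congr_fun measurableSet_Ioc hcongr, integral_conj, ← hJ, hJ0,
    map_zero]
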